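/- Let Φ ∈ ℂ^{N×R} (R ≤ N) have full column rank, and define the kernel matrices Ψx = Φ Φ* and Ψy = Ψ'Φ* for some Ψ' ∈ ℂ^{N×R}. If K ∈ ℂ^{N×N} satisfies Ψx K = Ψy, then K_RFF := Φ* K (Φ*)† satisfies Φ* Φ K_RFF = Φ* Ψ'. -/
import Mathlib

open Matrix

def IsMoorePenroseInverse {N R : ℕ} (A : Matrix (Fin N) (Fin R) ℂ)
    (P : Matrix (Fin R) (Fin N) ℂ) : Prop :=
  A * P * A = A ∧ P * A * P = P ∧ (A * P)ᴴ = A * P ∧ (P * A)ᴴ = P * A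

lemma mul_left_cancel_of_li {N R M : ℕ} (Φ : Matrix (Fin N) (Fin R) ℂ)
    (hΦ : LinearIndependent ℂ (fun j : Fin R => fun i : Fin N => Φ i j))
    (B C : Matrix (Fin R) (Fin M) ℂ) (h : Φ * B = Φ * C) : B = C := by
  ext j k
  have h1 := Fintype.linearIndependent_iff.mp hΦ (fun j => B j k - C j k) ?_ j
  · exact sub_eq_zero.mp h1
  · funext i
    have := congrFun (congrFun h i) k
    simp only [Matrix.mul_apply] at this
    simp only [Finset.sum_apply, Pi.smul_apply, smul_eq_mul, Pi.zero_apply]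
    simp only [sub_mul, Finset.sum_sub_distrib]
    rw [sub_eq_zero]
    simpa [mul_comm] using this

/-- If `Φ` has full column rank, `Ψx = Φ Φ*`, `Ψy = Ψ' Φ*`, and `Ψx K = Ψy`, then
`K_RFF := Φ* K (Φ*)†` satisfies the normal equation `Φ* Φ K_RFF = Φ* Ψ'`. -/
theorem rff_koopman_normal_equation {N R : ℕ}
    (Φ Ψ' : Matrix (Fin N) (Fin R) ℂ)
    (hΦ : LinearIndependent ℂ (fun j : Fin R => fun i : Fin N => Φ i j))
    (K : Matrix (Fin N) (Fin N) ℂ)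
    (hK : (Φ * Φᴴ) * K = Ψ' * Φᴴ)
    (P : Matrix (Fin N) (Fin R) ℂ)
    (hP : IsMoorePenroseInverse Φᴴ P) :
    Φᴴ * Φ * (Φᴴ * K * P) = Φᴴ * Ψ' := by
  obtain ⟨h1, h2, h3, h4⟩ := hP
  have h3' : Pᴴ * Φ = Φᴴ * P := by
    simpa [conjTranspose_mul] using h3
  have hΦP : Φ * (Φᴴ * P) = Φ * (1 : Matrix (Fin R) (Fin R) ℂ) := by
    have := congrArg conjTranspose h1
    simp only [conjTranspose_mul, conjTranspose_conjTranspose] at this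
    rw [h3'] at this
    rw [Matrix.mul_one]
    exact this
  have hI : Φᴴ * P = 1 := mul_left_cancel_of_li Φ hΦ _ _ hΦP
  calc Φᴴ * Φ * (Φᴴ * K * P) = Φᴴ * ((Φ * Φᴴ * K) * P) := by
        simp only [Matrix.mul_assoc]
    _ = Φᴴ * (Ψ' * (Φᴴ * P)) := by rw [hK]; simp only [Matrix.mul_assoc]
    _ = Φᴴ * Ψ' := by rw [hI, Matrix.mul_one]
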